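/- There exists a unique Borel probability measure μ on ℝ with the following property: if Y is a random variable with law μ and U is uniformly distributed on [0,1] and independent of Y, then the random variable U·Y + U·(1−U) also has law μ. -/

import Mathlib

open MeasureTheory Set Filter Topology ENNReal

noncomputable section

namespace UYFix

def mm : ℝ × ℝ → ℝ := fun p => p.2 * p.1 + p.2 * (1 - p.2)

lemma mm_meas : Measurable mm := by unfold mm; fun_prop

def eta : Measure ℝ := volume.restrict (Set.Ioc (0:ℝ) 1)

instance : IsProbabilityMeasure eta := ⟨by simp [eta, Real.volume_Ioc]⟩

def TT (μ : Measure ℝ) : Measure ℝ := Measure.map mm (μ.prod eta)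

lemma restrictIcc_eq : volume.restrict (Set.Icc (0:ℝ) 1) = eta :=
  (Measure.restrict_congr_set Ioc_ae_eq_Icc).symm

instance TT_prob (μ : Measure ℝ) [IsProbabilityMeasure μ] : IsProbabilityMeasure (TT μ) :=
  Measure.isProbabilityMeasure_map mm_meas.aemeasurable

lemma TT_apply (μ : Measure ℝ) [SFinite μ] {A : Set ℝ} (hA : MeasurableSet A) :
    TT μ A = ∫⁻ u in Set.Ioc (0:ℝ) 1, μ {y | u * y + u * (1 - u) ∈ A} := by
  rw [TT, Measure.map_apply mm_meas hA, Measure.prod_apply_symm (mm_meas hA)]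
  rfl

lemma TT_Iic (μ : Measure ℝ) [SFinite μ] (x : ℝ) :
    TT μ (Iic x) = ∫⁻ u in Set.Ioc (0:ℝ) 1, μ (Iic ((x - u * (1 - u)) / u)) := by
  rw [TT_apply μ measurableSet_Iic]
  refine setLIntegral_congr_fun measurableSet_Ioc (fun u hu => ?_)
  congr 1
  ext y
  simp only [mem_setOf_eq, mem_Iic]
  rw [le_div_iff₀ hu.1]
  constructor <;> intro h <;> nlinarith



/-- pointwise "absolute difference" of CDFs, in `ℝ≥0∞` -/
def dd (μ ν : Measure ℝ) (x : ℝ) : ℝ≥0∞ := (μ (Iic x) - ν (Iic x)) + (ν (Iic x) - μ (Iic x))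

lemma meas_Iic_measurable (μ : Measure ℝ) : Measurable (fun x => μ (Iic x)) := by
  apply Monotone.measurable
  intro a b hab
  exact measure_mono (Iic_subset_Iic.2 hab)

lemma dd_meas (μ ν : Measure ℝ) : Measurable (dd μ ν) :=
  ((meas_Iic_measurable μ).sub (meas_Iic_measurable ν)).add
    ((meas_Iic_measurable ν).sub (meas_Iic_measurable μ))

lemma dd_symm (μ ν : Measure ℝ) (x : ℝ) : dd μ ν x = dd ν μ x := add_comm _ _

lemma dd_triangle (μ ν ρ : Measure ℝ) (x : ℝ) : dd μ ρ x ≤ dd μ ν x + dd ν ρ x := by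
  unfold dd
  have h1 : μ (Iic x) - ρ (Iic x) ≤ (μ (Iic x) - ν (Iic x)) + (ν (Iic x) - ρ (Iic x)) :=
    tsub_le_tsub_add_tsub
  have h2 : ρ (Iic x) - μ (Iic x) ≤ (ρ (Iic x) - ν (Iic x)) + (ν (Iic x) - μ (Iic x)) :=
    tsub_le_tsub_add_tsub
  calc (μ (Iic x) - ρ (Iic x)) + (ρ (Iic x) - μ (Iic x)) ≤ _ + _ := add_le_add h1 h2
  _ = _ := by ring

def DD (μ ν : Measure ℝ) : ℝ≥0∞ := ∫⁻ x, dd μ ν x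

lemma DD_symm (μ ν : Measure ℝ) : DD μ ν = DD ν μ := by
  unfold DD; simp_rw [dd_symm μ ν]

lemma DD_triangle (μ ν ρ : Measure ℝ) : DD μ ρ ≤ DD μ ν + DD ν ρ := by
  calc DD μ ρ ≤ ∫⁻ x, (dd μ ν x + dd ν ρ x) := lintegral_mono (dd_triangle μ ν ρ)
  _ = DD μ ν + DD ν ρ := lintegral_add_left (dd_meas μ ν) _

/-- change of variables for an affine map -/
lemma lintegral_affine {g : ℝ → ℝ≥0∞} (hg : Measurable g) {u : ℝ} (hu : 0 < u) (c : ℝ) :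
    ∫⁻ x, g ((x - c) / u) = ENNReal.ofReal u * ∫⁻ x, g x := by
  have h1 : (fun x : ℝ => (x - c) / u) = (fun x : ℝ => u⁻¹ * x) ∘ (fun x : ℝ => x + (-c)) := by
    ext x; simp [div_eq_inv_mul]; left; trivial
  have hmap : Measure.map (fun x : ℝ => (x - c) / u) volume
      = ENNReal.ofReal u • (volume : Measure ℝ) := by
    rw [h1, ← Measure.map_map (by fun_prop) (by fun_prop)]
    rw [map_add_right_eq_self volume (-c)]
    rw [Real.map_volume_mul_left (inv_ne_zero hu.ne')]
    congr 1
    rw [inv_inv, abs_of_pos hu]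
  calc ∫⁻ x, g ((x - c) / u)
      = ∫⁻ y, g y ∂(Measure.map (fun x : ℝ => (x - c) / u) volume) := by
        rw [lintegral_map hg (by fun_prop)]
    _ = ENNReal.ofReal u * ∫⁻ x, g x := by rw [hmap, lintegral_smul_measure, smul_eq_mul]

lemma lintegral_ofReal_Ioc : ∫⁻ u in Set.Ioc (0:ℝ) 1, ENNReal.ofReal u = 1 / 2 := by
  have hint : IntegrableOn (fun u : ℝ => u) (Set.Ioc (0:ℝ) 1) volume := by
    apply Continuous.integrableOn_Ioc; fun_prop
  rw [← ofReal_integral_eq_lintegral_ofReal hint]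
  · have : ∫ u in Set.Ioc (0:ℝ) 1, u = 1 / 2 := by
      rw [← intervalIntegral.integral_of_le zero_le_one, integral_id]
      norm_num
    rw [this]
    rw [ENNReal.ofReal_div_of_pos (by norm_num)]
    norm_num
  · filter_upwards [ae_restrict_mem measurableSet_Ioc] with u hu
    exact le_of_lt hu.1

def phi (x u : ℝ) : ℝ := (x - u * (1 - u)) / u

lemma phi_meas : Measurable (Function.uncurry phi) := by unfold Function.uncurry phi; fun_prop

/-- one-sided comparison of the CDFs of the images -/
lemma TT_Iic_sub_le (μ ν : Measure ℝ) [SFinite μ] [SFinite ν] (x : ℝ) :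
    TT μ (Iic x) - TT ν (Iic x) ≤ ∫⁻ u in Set.Ioc (0:ℝ) 1, dd μ ν (phi x u) := by
  rw [tsub_le_iff_right, TT_Iic, TT_Iic]
  have hm : Measurable fun u : ℝ => dd μ ν (phi x u) := (dd_meas μ ν).comp (by unfold phi; fun_prop)
  rw [← lintegral_add_left hm]
  apply lintegral_mono
  intro u
  calc μ (Iic (phi x u)) ≤ (μ (Iic (phi x u)) - ν (Iic (phi x u))) + ν (Iic (phi x u)) :=
        le_tsub_add
  _ ≤ dd μ ν (phi x u) + ν (Iic (phi x u)) := by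
        apply add_le_add_left; exact le_self_add
  _ = _ := by simp only [phi]

lemma dd_TT_le (μ ν : Measure ℝ) [SFinite μ] [SFinite ν] (x : ℝ) :
    dd (TT μ) (TT ν) x ≤ ∫⁻ u in Set.Ioc (0:ℝ) 1, dd μ ν (phi x u) := by
  rcases le_total (TT μ (Iic x)) (TT ν (Iic x)) with h | h
  · have h0 : TT μ (Iic x) - TT ν (Iic x) = 0 := tsub_eq_zero_of_le h
    rw [dd, h0, zero_add]
    calc TT ν (Iic x) - TT μ (Iic x) ≤ ∫⁻ u in Set.Ioc (0:ℝ) 1, dd ν μ (phi x u) :=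
          TT_Iic_sub_le ν μ x
    _ = _ := by simp_rw [dd_symm ν μ]
  · have h0 : TT ν (Iic x) - TT μ (Iic x) = 0 := tsub_eq_zero_of_le h
    rw [dd, h0, add_zero]
    exact TT_Iic_sub_le μ ν x

lemma DD_TT_le (μ ν : Measure ℝ) [SFinite μ] [SFinite ν] :
    DD (TT μ) (TT ν) ≤ DD μ ν / 2 := by
  have hmeas : Measurable (fun p : ℝ × ℝ => dd μ ν (phi p.1 p.2)) :=
    (dd_meas μ ν).comp (by unfold phi; fun_prop)
  calc DD (TT μ) (TT ν) ≤ ∫⁻ x, ∫⁻ u in Set.Ioc (0:ℝ) 1, dd μ ν (phi x u) :=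
        lintegral_mono (dd_TT_le μ ν)
  _ = ∫⁻ u in Set.Ioc (0:ℝ) 1, ∫⁻ x, dd μ ν (phi x u) := by
        apply lintegral_lintegral_swap
        exact hmeas.aemeasurable
  _ = ∫⁻ u in Set.Ioc (0:ℝ) 1, ENNReal.ofReal u * DD μ ν := by
        refine setLIntegral_congr_fun measurableSet_Ioc (fun u hu => ?_)
        exact lintegral_affine (dd_meas μ ν) hu.1 _
  _ = (∫⁻ u in Set.Ioc (0:ℝ) 1, ENNReal.ofReal u) * DD μ ν := by
        rw [lintegral_mul_const'' _ (by fun_prop)]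
  _ = DD μ ν / 2 := by rw [lintegral_ofReal_Ioc, one_div, ENNReal.div_eq_inv_mul]


lemma ofReal_half : ENNReal.ofReal 2⁻¹ = 2⁻¹ := by
  rw [ENNReal.ofReal_inv_of_pos (by norm_num)]
  norm_num

lemma half_cancel {A B : ℝ≥0∞} (hA : A ≠ ∞) (h : A ≤ (B + A) * 2⁻¹) : A ≤ B := by
  have h2 : A * 2 ≤ (B + A) * 2⁻¹ * 2 := mul_le_mul_left h 2
  rw [mul_assoc, ENNReal.inv_mul_cancel (by norm_num) (by norm_num), mul_one] at h2
  have h3 : A + A ≤ B + A := by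
    calc A + A = A * 2 := by ring
    _ ≤ B + A := h2
  exact (ENNReal.add_le_add_iff_right hA).1 h3

lemma TT_apply_le (μ : Measure ℝ) [SFinite μ] {A : Set ℝ} (hA : MeasurableSet A)
    (B : ℝ → Set ℝ) (hB : ∀ u ∈ Set.Ioc (0:ℝ) 1, {y | u * y + u * (1 - u) ∈ A} ⊆ B u)
    (hmeas : Measurable fun u => μ (B u)) :
    TT μ A ≤ ∫⁻ u in Set.Ioc (0:ℝ) 1, μ (B u) := by
  rw [TT_apply μ hA]
  exact setLIntegral_mono hmeas fun u hu => measure_mono (hB u hu)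

lemma Ioc_split : Set.Ioc (0:ℝ) 1 = Set.Ioc (0:ℝ) 2⁻¹ ∪ Set.Ioc (2⁻¹:ℝ) 1 := by
  rw [Set.Ioc_union_Ioc_eq_Ioc] <;> norm_num

lemma split_bound (μ : Measure ℝ) (f : ℝ → Set ℝ) (hmeas : Measurable fun u => μ (f u))
    (B : ℝ≥0∞) (A : ℝ≥0∞)
    (h1 : ∀ u ∈ Set.Ioc (0:ℝ) 2⁻¹, μ (f u) ≤ B) (h2 : ∀ u ∈ Set.Ioc (2⁻¹:ℝ) 1, μ (f u) ≤ A) :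
    ∫⁻ u in Set.Ioc (0:ℝ) 1, μ (f u) ≤ (B + A) * 2⁻¹ := by
  rw [Ioc_split, lintegral_union measurableSet_Ioc (Set.Ioc_disjoint_Ioc_of_le le_rfl)]
  have e1 : ∫⁻ u in Set.Ioc (0:ℝ) 2⁻¹, μ (f u) ≤ B * 2⁻¹ := by
    calc ∫⁻ u in Set.Ioc (0:ℝ) 2⁻¹, μ (f u) ≤ ∫⁻ _ in Set.Ioc (0:ℝ) 2⁻¹, B :=
          setLIntegral_mono measurable_const h1
    _ = B * 2⁻¹ := by
          rw [setLIntegral_const, Real.volume_Ioc]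
          rw [show (2:ℝ)⁻¹ - 0 = 2⁻¹ by norm_num, ofReal_half]
  have e2 : ∫⁻ u in Set.Ioc (2⁻¹:ℝ) 1, μ (f u) ≤ A * 2⁻¹ := by
    calc ∫⁻ u in Set.Ioc (2⁻¹:ℝ) 1, μ (f u) ≤ ∫⁻ _ in Set.Ioc (2⁻¹:ℝ) 1, A :=
          setLIntegral_mono measurable_const h2
    _ = A * 2⁻¹ := by
          rw [setLIntegral_const, Real.volume_Ioc]
          rw [show (1:ℝ) - 2⁻¹ = 2⁻¹ by norm_num, ofReal_half]
  calc _ ≤ B * 2⁻¹ + A * 2⁻¹ := add_le_add e1 e2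
  _ = (B + A) * 2⁻¹ := (add_mul _ _ _).symm

lemma left_tail (μ : Measure ℝ) [IsProbabilityMeasure μ] (hfix : TT μ = μ) :
    μ (Iio 0) = 0 := by
  have hmono : ∀ t : ℝ, Measurable fun u : ℝ => μ (Iio (-t - (1 - u))) := by
    intro t
    apply Monotone.measurable
    intro a b hab
    exact measure_mono (Iio_subset_Iio (by linarith))
  have hstep : ∀ t : ℝ, 0 ≤ t → μ (Iio (-t)) ≤ μ (Iio (-(t + 2⁻¹))) := by
    intro t ht
    have hb : μ (Iio (-t)) ≤ ∫⁻ u in Set.Ioc (0:ℝ) 1, μ (Iio (-t - (1 - u))) := by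
      conv_lhs => rw [← hfix]
      apply TT_apply_le μ measurableSet_Iio _ _ (hmono t)
      intro u hu y hy
      simp only [mem_setOf_eq, mem_Iio] at hy ⊢
      by_contra hcon
      push_neg at hcon
      nlinarith [mul_le_mul_of_nonneg_left hcon hu.1.le, mul_le_of_le_one_right ht hu.2]
    have hsp : ∫⁻ u in Set.Ioc (0:ℝ) 1, μ (Iio (-t - (1 - u)))
        ≤ (μ (Iio (-(t + 2⁻¹))) + μ (Iio (-t))) * 2⁻¹ := by
      apply split_bound μ _ (hmono t)
      · intro u hu
        exact measure_mono (Iio_subset_Iio (by simp only [mem_Ioc] at hu; linarith [hu.2]))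
      · intro u hu
        exact measure_mono (Iio_subset_Iio (by simp only [mem_Ioc] at hu; linarith [hu.2]))
    exact half_cancel (measure_ne_top μ _) (hb.trans hsp)
  have hn : ∀ n : ℕ, μ (Iio 0) ≤ μ (Iio (-(n * 2⁻¹))) := by
    intro n
    induction n with
    | zero => simp
    | succ n ih =>
        refine ih.trans ?_
        have := hstep ((n : ℝ) * 2⁻¹) (by positivity)
        have he : -((n : ℝ) * 2⁻¹ + 2⁻¹) = -((n + 1 : ℕ) * 2⁻¹) := by push_cast; ring
        rwa [he] at this
  have hempty : (⋂ n : ℕ, Iio (-((n : ℝ) * 2⁻¹))) = ∅ := by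
    ext y
    simp only [mem_iInter, mem_Iio, mem_empty_iff_false, iff_false, not_forall, not_lt]
    obtain ⟨n, hn'⟩ := exists_nat_gt (-y * 2)
    exact ⟨n, by nlinarith⟩
  have htend : Tendsto (fun n : ℕ => μ (Iio (-((n : ℝ) * 2⁻¹)))) atTop
      (𝓝 (μ (⋂ n : ℕ, Iio (-((n : ℝ) * 2⁻¹))))) := by
    apply tendsto_measure_iInter_atTop (fun n => measurableSet_Iio.nullMeasurableSet)
    · intro a b hab
      apply Iio_subset_Iio
      have : (a : ℝ) ≤ b := Nat.cast_le.2 hab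
      nlinarith
    · exact ⟨0, measure_ne_top μ _⟩
  rw [hempty, measure_empty] at htend
  exact le_antisymm (ge_of_tendsto' htend hn) zero_le

lemma right_tail (μ : Measure ℝ) [IsProbabilityMeasure μ] (hfix : TT μ = μ) :
    μ (Ioi 1) = 0 := by
  have hmono : ∀ t : ℝ, 0 ≤ t → Measurable fun u : ℝ => μ (Ioi (1 + t + t * (1 - u))) := by
    intro t ht
    apply Monotone.measurable
    intro a b hab
    apply measure_mono (Ioi_subset_Ioi ?_)
    nlinarith
  have hstep : ∀ t : ℝ, 0 < t → μ (Ioi (1 + t)) ≤ μ (Ioi (1 + (3/2) * t)) := by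
    intro t ht
    have hb : μ (Ioi (1 + t)) ≤ ∫⁻ u in Set.Ioc (0:ℝ) 1, μ (Ioi (1 + t + t * (1 - u))) := by
      conv_lhs => rw [← hfix]
      apply TT_apply_le μ measurableSet_Ioi _ _ (hmono t ht.le)
      intro u hu y hy
      simp only [mem_setOf_eq, mem_Ioi] at hy ⊢
      by_contra hcon
      push_neg at hcon
      nlinarith [mul_le_mul_of_nonneg_left hcon hu.1.le, sq_nonneg (1 - u),
        mul_nonneg ht.le (sq_nonneg (1 - u))]
    have hsp : ∫⁻ u in Set.Ioc (0:ℝ) 1, μ (Ioi (1 + t + t * (1 - u)))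
        ≤ (μ (Ioi (1 + (3/2) * t)) + μ (Ioi (1 + t))) * 2⁻¹ := by
      apply split_bound μ _ (hmono t ht.le)
      · intro u hu
        apply measure_mono (Ioi_subset_Ioi ?_)
        simp only [mem_Ioc] at hu
        nlinarith [hu.2]
      · intro u hu
        apply measure_mono (Ioi_subset_Ioi ?_)
        simp only [mem_Ioc] at hu
        nlinarith [hu.1, hu.2, ht.le]
    exact half_cancel (measure_ne_top μ _) (hb.trans hsp)
  have hzero : ∀ t : ℝ, 0 < t → μ (Ioi (1 + t)) = 0 := by
    intro t ht
    have hn : ∀ n : ℕ, μ (Ioi (1 + t)) ≤ μ (Ioi (1 + (3/2) ^ n * t)) := by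
      intro n
      induction n with
      | zero => simp
      | succ n ih =>
          refine ih.trans ?_
          have h1 := hstep ((3/2) ^ n * t) (by positivity)
          have he : 1 + (3/2) * ((3/2 : ℝ) ^ n * t) = 1 + (3/2) ^ (n + 1) * t := by ring
          rwa [he] at h1
    have hempty : (⋂ n : ℕ, Ioi (1 + (3/2 : ℝ) ^ n * t)) = ∅ := by
      ext y
      simp only [mem_iInter, mem_Ioi, mem_empty_iff_false, iff_false, not_forall, not_lt]
      obtain ⟨n, hn'⟩ := exists_nat_gt ((y - 1) / t * 2)
      refine ⟨n, ?_⟩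
      have hpow : 1 + (n : ℝ) * (1/2) ≤ (3/2 : ℝ) ^ n := by
        have := one_add_mul_le_pow (a := (1/2 : ℝ)) (by norm_num) n
        refine this.trans_eq ?_; norm_num
      have h2 : (y - 1) / t < (n : ℝ) * (1/2) := by linarith
      have h3 : y - 1 < (n : ℝ) * (1/2) * t := by
        rw [div_lt_iff₀ ht] at h2
        nlinarith
      nlinarith [mul_le_mul_of_nonneg_right hpow ht.le]
    have htend : Tendsto (fun n : ℕ => μ (Ioi (1 + (3/2 : ℝ) ^ n * t))) atTop
        (𝓝 (μ (⋂ n : ℕ, Ioi (1 + (3/2 : ℝ) ^ n * t)))) := by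
      apply tendsto_measure_iInter_atTop (fun n => measurableSet_Ioi.nullMeasurableSet)
      · intro a b hab
        apply Ioi_subset_Ioi
        have hp : (3/2 : ℝ) ^ a ≤ (3/2) ^ b := pow_le_pow_right₀ (by norm_num) hab
        nlinarith
      · exact ⟨0, measure_ne_top μ _⟩
    rw [hempty, measure_empty] at htend
    exact le_antisymm (ge_of_tendsto' htend hn) zero_le
  have hU : Ioi (1:ℝ) = ⋃ n : ℕ, Ioi (1 + ((n : ℝ) + 1)⁻¹) := by
    ext y
    simp only [mem_Ioi, mem_iUnion]
    constructor
    · intro hy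
      obtain ⟨n, hn'⟩ := exists_nat_gt (y - 1)⁻¹
      refine ⟨n, ?_⟩
      have h0 : (0:ℝ) < y - 1 := by linarith
      have h1 : (y - 1)⁻¹ < (n : ℝ) + 1 := by
        have : (n : ℝ) ≤ (n : ℝ) + 1 := by linarith
        linarith
      have h2 : ((n : ℝ) + 1)⁻¹ < y - 1 := by
        rw [inv_lt_comm₀ (by positivity) h0]
        exact h1
      linarith
    · intro ⟨n, hn'⟩
      have : (0:ℝ) < ((n : ℝ) + 1)⁻¹ := by positivity
      linarith
  rw [hU]
  apply measure_iUnion_null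
  intro n
  exact hzero _ (by positivity)

lemma fixed_support (μ : Measure ℝ) [IsProbabilityMeasure μ] (hfix : TT μ = μ) :
    μ (Set.Icc (0:ℝ) 1)ᶜ = 0 := by
  have hc : (Set.Icc (0:ℝ) 1)ᶜ = Iio 0 ∪ Ioi 1 := by
    ext y
    simp only [mem_compl_iff, mem_Icc, not_and_or, not_le, mem_union, mem_Iio, mem_Ioi]
  rw [hc]
  exact measure_union_null (left_tail μ hfix) (right_tail μ hfix)


lemma Iic_eq_one_of_supp (μ : Measure ℝ) [IsProbabilityMeasure μ]
    (hs : μ (Set.Icc (0:ℝ) 1)ᶜ = 0) {x : ℝ} (hx : 1 ≤ x) : μ (Iic x) = 1 := by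
  have h1 : μ (Iic x)ᶜ = 0 := by
    apply measure_mono_null _ hs
    intro y hy
    simp only [mem_compl_iff, mem_Iic, not_le] at hy
    simp only [mem_compl_iff, mem_Icc, not_and_or, not_le]
    right
    linarith
  have := measure_add_measure_compl (μ := μ) (s := Iic x) measurableSet_Iic
  rw [h1, add_zero] at this
  rw [this, measure_univ]

lemma Iic_eq_zero_of_supp (μ : Measure ℝ) (hs : μ (Set.Icc (0:ℝ) 1)ᶜ = 0) {x : ℝ}
    (hx : x < 0) : μ (Iic x) = 0 := by
  apply measure_mono_null _ hs
  intro y hy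
  simp only [mem_Iic] at hy
  simp only [mem_compl_iff, mem_Icc, not_and_or, not_le]
  left
  linarith

lemma dd_le_indicator (μ ν : Measure ℝ) [IsProbabilityMeasure μ] [IsProbabilityMeasure ν]
    (hμ : μ (Set.Icc (0:ℝ) 1)ᶜ = 0) (hν : ν (Set.Icc (0:ℝ) 1)ᶜ = 0) (x : ℝ) :
    dd μ ν x ≤ (Set.Icc (0:ℝ) 1).indicator (fun _ => 2) x := by
  by_cases hx : x ∈ Set.Icc (0:ℝ) 1
  · rw [indicator_of_mem hx]
    calc dd μ ν x ≤ μ (Iic x) + ν (Iic x) := add_le_add tsub_le_self tsub_le_self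
    _ ≤ 1 + 1 := add_le_add prob_le_one prob_le_one
    _ = 2 := one_add_one_eq_two
  · rw [indicator_of_notMem hx]
    simp only [mem_Icc, not_and_or, not_le] at hx
    rcases hx with hx | hx
    · rw [dd, Iic_eq_zero_of_supp μ hμ hx, Iic_eq_zero_of_supp ν hν hx]
      simp
    · rw [dd, Iic_eq_one_of_supp μ hμ hx.le, Iic_eq_one_of_supp ν hν hx.le]
      simp
  
lemma DD_ne_top (μ ν : Measure ℝ) [IsProbabilityMeasure μ] [IsProbabilityMeasure ν]
    (hμ : μ (Set.Icc (0:ℝ) 1)ᶜ = 0) (hν : ν (Set.Icc (0:ℝ) 1)ᶜ = 0) :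
    DD μ ν ≠ ∞ := by
  have hle : DD μ ν ≤ 2 := by
    calc DD μ ν ≤ ∫⁻ x, (Set.Icc (0:ℝ) 1).indicator (fun _ => 2) x :=
          lintegral_mono (dd_le_indicator μ ν hμ hν)
    _ = 2 * volume (Set.Icc (0:ℝ) 1) := by
          rw [lintegral_indicator measurableSet_Icc, setLIntegral_const]
    _ = 2 := by rw [Real.volume_Icc]; norm_num
  exact (hle.trans_lt (by norm_num)).ne

lemma ext_of_ae_Iic (μ ν : Measure ℝ) [IsProbabilityMeasure μ] [IsProbabilityMeasure ν]
    (h : ∀ᵐ x : ℝ, μ (Iic x) = ν (Iic x)) : μ = ν := by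
  set S := {x : ℝ | μ (Iic x) = ν (Iic x)} with hSdef
  have hnull : volume Sᶜ = 0 := by
    rw [ae_iff] at h
    exact h
  have hdense : Dense S := by
    rw [dense_iff_inter_open]
    intro U hU hUne
    by_contra hc
    have hsub : U ⊆ Sᶜ := by
      intro x hx hxS
      exact hc ⟨x, hx, hxS⟩
    have : volume U = 0 := measure_mono_null hsub hnull
    exact absurd this (hU.measure_pos volume hUne).ne'
  apply MeasureTheory.ext_of_generate_finite _ ?hgen (isPiSystem_Ioc_mem S S) ?heq (by simp [measure_univ])
  case hgen =>
    rw [BorelSpace.measurable_eq (α := ℝ)]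
    exact hdense.borel_eq_generateFrom_Ioc_mem
  case heq =>
    rintro T ⟨a, ha, b, hb, hab, rfl⟩
    have hd : Ioc a b = Iic b \ Iic a := (Iic_sdiff_Iic).symm
    rw [hd, measure_diff (Iic_subset_Iic.2 hab.le) measurableSet_Iic.nullMeasurableSet
        (measure_ne_top μ _),
      measure_diff (Iic_subset_Iic.2 hab.le) measurableSet_Iic.nullMeasurableSet
        (measure_ne_top ν _), ha, hb]

lemma fixed_unique (μ ν : Measure ℝ) [IsProbabilityMeasure μ] [IsProbabilityMeasure ν]
    (hμ : TT μ = μ) (hν : TT ν = ν) : μ = ν := by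
  have hμs := fixed_support μ hμ
  have hνs := fixed_support ν hν
  have hfin : DD μ ν ≠ ∞ := DD_ne_top μ ν hμs hνs
  have hc : DD μ ν ≤ DD μ ν / 2 := by
    calc DD μ ν = DD (TT μ) (TT ν) := by rw [hμ, hν]
    _ ≤ DD μ ν / 2 := DD_TT_le μ ν
  have hzero : DD μ ν = 0 := by
    by_contra h
    exact absurd hc (not_le.2 (ENNReal.half_lt_self h hfin))
  have hae : ∀ᵐ x : ℝ, dd μ ν x = 0 := (lintegral_eq_zero_iff (dd_meas μ ν)).1 hzero
  apply ext_of_ae_Iic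
  filter_upwards [hae] with x hx
  obtain ⟨h1, h2⟩ := add_eq_zero.1 hx
  exact le_antisymm (tsub_eq_zero_iff_le.1 h1) (tsub_eq_zero_iff_le.1 h2)


/-! ### Existence -/

def museq : ℕ → Measure ℝ
  | 0 => Measure.dirac 0
  | n + 1 => TT (museq n)

instance museq_prob : ∀ n, IsProbabilityMeasure (museq n)
  | 0 => by unfold museq; infer_instance
  | n + 1 => by
      haveI := museq_prob n
      unfold museq
      infer_instance

lemma TT_supp (μ : Measure ℝ) [SFinite μ] (hμ : μ (Set.Icc (0:ℝ) 1)ᶜ = 0) :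
    TT μ (Set.Icc (0:ℝ) 1)ᶜ = 0 := by
  rw [TT_apply μ measurableSet_Icc.compl]
  have hz : ∀ u ∈ Set.Ioc (0:ℝ) 1,
      μ {y | u * y + u * (1 - u) ∈ (Set.Icc (0:ℝ) 1)ᶜ} = (fun _ => (0:ℝ≥0∞)) u := by
    intro u hu
    apply measure_mono_null _ hμ
    intro y hy
    simp only [mem_setOf_eq, mem_compl_iff, mem_Icc, not_and_or, not_le] at hy ⊢
    by_contra hcon
    push_neg at hcon
    rcases hy with h | h
    · nlinarith [hu.1, hu.2, hcon.1, hcon.2]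
    · nlinarith [hu.1, hu.2, hcon.1, hcon.2, sq_nonneg (1 - u)]
  rw [setLIntegral_congr_fun measurableSet_Ioc hz]
  simp

lemma museq_supp : ∀ n, museq n (Set.Icc (0:ℝ) 1)ᶜ = 0
  | 0 => by
      unfold museq
      rw [Measure.dirac_apply' _ measurableSet_Icc.compl]
      simp
  | n + 1 => by
      haveI := museq_prob n
      unfold museq
      exact TT_supp _ (museq_supp n)

lemma TT_mono (μ ν : Measure ℝ) [SFinite μ] [SFinite ν]
    (h : ∀ x, μ (Iic x) ≤ ν (Iic x)) (x : ℝ) : TT μ (Iic x) ≤ TT ν (Iic x) := by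
  rw [TT_Iic, TT_Iic]
  exact lintegral_mono fun u => h _

lemma museq_anti : ∀ n x, museq (n + 1) (Iic x) ≤ museq n (Iic x)
  | 0, x => by
      by_cases hx : 0 ≤ x
      · haveI := museq_prob 1
        calc museq 1 (Iic x) ≤ 1 := prob_le_one
        _ = museq 0 (Iic x) := by
            unfold museq
            rw [Measure.dirac_apply' _ measurableSet_Iic]
            simp [mem_Iic, hx]
      · push_neg at hx
        have h0 : museq 1 (Iic x) = 0 := by
          show TT (museq 0) (Iic x) = 0
          rw [TT_Iic]
          have hz : ∀ u ∈ Set.Ioc (0:ℝ) 1,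
              museq 0 (Iic ((x - u * (1 - u)) / u)) = (fun _ => (0:ℝ≥0∞)) u := by
            intro u hu
            have hneg : (x - u * (1 - u)) / u < 0 := by
              apply div_neg_of_neg_of_pos _ hu.1
              nlinarith [hu.1, hu.2]
            unfold museq
            rw [Measure.dirac_apply' _ measurableSet_Iic]
            simp only [indicator_apply, Pi.one_apply]
            have hnotmem : (0:ℝ) ∉ Iic ((x - u * (1 - u)) / u) := by
              simp only [mem_Iic, not_le]
              linarith
            rw [if_neg hnotmem]
          rw [setLIntegral_congr_fun measurableSet_Ioc hz]
          simp
        rw [h0]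
        exact zero_le
  | n + 1, x => by
      haveI := museq_prob n
      haveI := museq_prob (n + 1)
      exact TT_mono _ _ (museq_anti n) x

def gE (x : ℝ) : ℝ≥0∞ := ⨅ n, museq n (Iic x)

lemma gE_ne_top (x : ℝ) : gE x ≠ ∞ := by
  haveI := museq_prob 0
  have : gE x ≤ 1 := (iInf_le _ 0).trans prob_le_one
  exact (this.trans_lt one_lt_top).ne

lemma gE_le (x : ℝ) (n : ℕ) : gE x ≤ museq n (Iic x) := iInf_le _ n

def gr (x : ℝ) : ℝ := (gE x).toReal

lemma gr_mono : Monotone gr := by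
  intro a b hab
  apply ENNReal.toReal_mono (gE_ne_top b)
  exact iInf_mono fun n => measure_mono (Iic_subset_Iic.2 hab)

lemma hconv (x : ℝ) : Tendsto (fun n => museq n (Iic x)) atTop (𝓝 (gE x)) :=
  tendsto_atTop_iInf (antitone_nat_of_succ_le fun n => museq_anti n x)

lemma gE_of_lt {x : ℝ} (hx : x < 0) : gE x = 0 := by
  apply le_antisymm _ zero_le
  exact (gE_le x 0).trans_eq (Iic_eq_zero_of_supp _ (museq_supp 0) hx)

lemma gE_of_ge {x : ℝ} (hx : 1 ≤ x) : gE x = 1 := by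
  have : ∀ n, museq n (Iic x) = 1 := fun n => by
    haveI := museq_prob n
    exact Iic_eq_one_of_supp _ (museq_supp n) hx
  rw [gE]
  simp [this]

lemma gr_of_lt {x : ℝ} (hx : x < 0) : gr x = 0 := by rw [gr, gE_of_lt hx]; simp

lemma gr_of_ge {x : ℝ} (hx : 1 ≤ x) : gr x = 1 := by rw [gr, gE_of_ge hx]; simp

def FF : StieltjesFunction ℝ := gr_mono.stieltjesFunction

lemma FF_of_lt {x : ℝ} (hx : x < 0) : FF x = 0 := by
  have h1 : FF x = Function.rightLim gr x := rfl
  rw [h1]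
  apply rightLim_eq_of_tendsto (α := ℝ) (β := ℝ)
  apply Tendsto.congr' _ tendsto_const_nhds
  filter_upwards [Ioo_mem_nhdsGT_of_mem (show x ∈ Ico x 0 from ⟨le_refl x, hx⟩)] with y hy
  exact (gr_of_lt hy.2).symm

lemma FF_of_ge {x : ℝ} (hx : 1 ≤ x) : FF x = 1 := by
  have h1 : FF x = Function.rightLim gr x := rfl
  rw [h1]
  apply rightLim_eq_of_tendsto (α := ℝ) (β := ℝ)
  apply Tendsto.congr' _ tendsto_const_nhds
  filter_upwards [self_mem_nhdsWithin] with y hy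
  exact (gr_of_ge (hx.trans hy.le)).symm

lemma FF_bot : Tendsto FF atBot (𝓝 0) := by
  apply Tendsto.congr' _ tendsto_const_nhds
  filter_upwards [eventually_lt_atBot (0:ℝ)] with x hx
  exact (FF_of_lt hx).symm

lemma FF_top : Tendsto FF atTop (𝓝 1) := by
  apply Tendsto.congr' _ tendsto_const_nhds
  filter_upwards [eventually_ge_atTop (1:ℝ)] with x hx
  exact (FF_of_ge hx).symm

def muinf : Measure ℝ := FF.measure

instance muinf_prob : IsProbabilityMeasure muinf :=
  ⟨by rw [muinf, FF.measure_univ FF_bot FF_top]; norm_num⟩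

lemma muinf_Iic (x : ℝ) : muinf (Iic x) = ENNReal.ofReal (FF x) := by
  rw [muinf, FF.measure_Iic FF_bot, sub_zero]

lemma muinf_supp : muinf (Set.Icc (0:ℝ) 1)ᶜ = 0 := by
  have hc : (Set.Icc (0:ℝ) 1)ᶜ = Iio 0 ∪ Ioi 1 := by
    ext y
    simp only [mem_compl_iff, mem_Icc, not_and_or, not_le, mem_union, mem_Iio, mem_Ioi]
  rw [hc]
  apply measure_union_null
  · have hU : Iio (0:ℝ) = ⋃ n : ℕ, Iic (-((n : ℝ) + 1)⁻¹) := by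
      ext y
      simp only [mem_Iio, mem_iUnion, mem_Iic]
      constructor
      · intro hy
        obtain ⟨n, hn'⟩ := exists_nat_gt (-y)⁻¹
        refine ⟨n, ?_⟩
        have h0 : (0:ℝ) < -y := by linarith
        have h1 : (-y)⁻¹ < (n : ℝ) + 1 := by linarith
        have h2 : ((n : ℝ) + 1)⁻¹ < -y := by
          rw [inv_lt_comm₀ (by positivity) h0]
          exact h1
        linarith
      · intro ⟨n, hn'⟩
        have : (0:ℝ) < ((n : ℝ) + 1)⁻¹ := by positivity
        linarith
    rw [hU]
    apply measure_iUnion_null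
    intro n
    rw [muinf_Iic, FF_of_lt (show -((n : ℝ) + 1)⁻¹ < 0 by rw [neg_lt_zero]; positivity)]
    simp
  · rw [← compl_Iic, measure_compl measurableSet_Iic (measure_ne_top _ _), measure_univ,
      muinf_Iic, FF_of_ge le_rfl, ENNReal.ofReal_one, tsub_self]

lemma muinf_ae_Iic : ∀ᵐ x : ℝ, muinf (Iic x) = gE x := by
  have hcnt : ∀ᵐ x : ℝ, ContinuousAt gr x := by
    rw [ae_iff]
    exact (gr_mono.countable_not_continuousAt).measure_zero volume
  filter_upwards [hcnt] with x hx
  have h1 : FF x = gr x := by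
    have h2 : FF x = Function.rightLim gr x := rfl
    rw [h2]
    apply rightLim_eq_of_tendsto (α := ℝ) (β := ℝ)
    exact hx.tendsto.mono_left nhdsWithin_le_nhds
  rw [muinf_Iic, h1, gr, ENNReal.ofReal_toReal (gE_ne_top x)]

lemma lintegral_ind2 : ∫⁻ x : ℝ, (Set.Icc (0:ℝ) 1).indicator (fun _ => (2:ℝ≥0∞)) x = 2 := by
  rw [lintegral_indicator measurableSet_Icc, setLIntegral_const, Real.volume_Icc]
  norm_num

lemma hDD : Tendsto (fun n => DD muinf (museq n)) atTop (𝓝 0) := by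
  have hres := tendsto_lintegral_of_dominated_convergence
    (F := fun n => dd muinf (museq n)) (f := fun _ => (0:ℝ≥0∞))
    ((Set.Icc (0:ℝ) 1).indicator (fun _ => (2:ℝ≥0∞)))
    (fun n => dd_meas _ _)
    (fun n => ae_of_all _ (by
      haveI := museq_prob n
      exact dd_le_indicator muinf (museq n) muinf_supp (museq_supp n)))
    (by rw [lintegral_ind2]; norm_num)
    ?_
  · simpa [DD] using hres
  · filter_upwards [muinf_ae_Iic] with x hx
    have heq : (fun n => dd muinf (museq n) x)
        = fun n => (gE x - museq n (Iic x)) + (museq n (Iic x) - gE x) := by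
      funext n
      rw [dd, hx]
    rw [heq]
    have t1 : Tendsto (fun n => gE x - museq n (Iic x)) atTop (𝓝 (gE x - gE x)) :=
      ENNReal.Tendsto.sub tendsto_const_nhds (hconv x) (Or.inl (gE_ne_top x))
    have t2 : Tendsto (fun n => museq n (Iic x) - gE x) atTop (𝓝 (gE x - gE x)) :=
      ENNReal.Tendsto.sub (hconv x) tendsto_const_nhds (Or.inr (gE_ne_top x))
    have := t1.add t2
    rw [tsub_self, add_zero] at this
    exact this

lemma TT_fixed : TT muinf = muinf := by
  have key : ∀ n, DD (TT muinf) muinf ≤ DD muinf (museq n) / 2 + DD muinf (museq (n + 1)) := by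
    intro n
    haveI := museq_prob n
    calc DD (TT muinf) muinf ≤ DD (TT muinf) (TT (museq n)) + DD (TT (museq n)) muinf :=
          DD_triangle _ _ _
    _ ≤ DD muinf (museq n) / 2 + DD muinf (museq (n + 1)) := by
          apply add_le_add (DD_TT_le _ _)
          rw [show TT (museq n) = museq (n + 1) from rfl, DD_symm]
  have h1 : Tendsto (fun n => DD muinf (museq n) / 2) atTop (𝓝 0) := by
    apply tendsto_of_tendsto_of_tendsto_of_le_of_le tendsto_const_nhds hDD
      (fun n => zero_le) (fun n => ENNReal.half_le_self)
  have h2 : Tendsto (fun n => DD muinf (museq (n + 1))) atTop (𝓝 0) :=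
    hDD.comp (tendsto_add_atTop_nat 1)
  have hlim : Tendsto (fun n => DD muinf (museq n) / 2 + DD muinf (museq (n + 1))) atTop
      (𝓝 0) := by
    have := h1.add h2
    rwa [add_zero] at this
  have hz : DD (TT muinf) muinf = 0 :=
    le_antisymm (ge_of_tendsto' hlim key) zero_le
  have hae : ∀ᵐ x : ℝ, dd (TT muinf) muinf x = 0 :=
    (lintegral_eq_zero_iff (dd_meas _ _)).1 hz
  apply ext_of_ae_Iic
  filter_upwards [hae] with x hx
  obtain ⟨h1', h2'⟩ := add_eq_zero.1 hx
  exact le_antisymm (tsub_eq_zero_iff_le.1 h1') (tsub_eq_zero_iff_le.1 h2')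

end UYFix

open UYFix in
/-- There exists a unique Borel probability measure `μ` on `ℝ` such that if `Y` has law `μ`
and `U` is uniform on `[0,1]` independent of `Y`, then `U·Y + U·(1−U)` has law `μ`. -/
theorem exists_unique_fixed_point :
    ∃! μ : Measure ℝ, IsProbabilityMeasure μ ∧
      Measure.map (fun p : ℝ × ℝ => p.2 * p.1 + p.2 * (1 - p.2))
        (μ.prod (volume.restrict (Set.Icc (0:ℝ) 1))) = μ := by
  refine ⟨muinf, ⟨inferInstance, ?_⟩, ?_⟩
  · rw [restrictIcc_eq]
    exact TT_fixed
  · rintro ν ⟨hν, hfix⟩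
    haveI := hν
    rw [restrictIcc_eq] at hfix
    exact fixed_unique ν muinf hfix TT_fixed
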